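/- Let T be a tree, let ν be the matching number of 𝒩(T), and let M and N be two ν-matchings of 𝒩(T). Let F ∈ M and suppose that the number of facets G ∈ N with F ∩ G ≠ ∅ is strictly greater than 2. Then there exists a ν-matching W of 𝒩(T), different from both M and N, such that W ⊆ M ∪ N and exactly 2 facets H ∈ W satisfy F ∩ H ≠ ∅. -/

import Mathlib

open scoped Classical
open SimpleGraph Finset MvPolynomial

variable {V : Type*}

/-- The closed neighborhood `N_G[u]` of a vertex, as a finite set. -/
noncomputable def closedNbhd [Fintype V] (G : SimpleGraph V) (u : V) : Finset V :=
  insert u (G.neighborFinset u)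

/-- `F` is a facet of the closed neighborhood complex `𝒩(G)`:
`F = N_G[u]` for some vertex `u`, and no closed neighborhood of another vertex is
contained in `N_G[u]`. -/
def IsNFacet [Fintype V] (G : SimpleGraph V) (F : Finset V) : Prop :=
  ∃ u : V, F = closedNbhd G u ∧
    ∀ v : V, v ≠ u → ¬ closedNbhd G v ⊆ closedNbhd G u

/-- A `k`-matching of `𝒩(G)`: a set of `k` pairwise disjoint facets of `𝒩(G)`. -/
def IsNMatching [Fintype V] (G : SimpleGraph V) (k : ℕ) (M : Finset (Finset V)) : Prop :=
  M.card = k ∧ (∀ F ∈ M, IsNFacet G F) ∧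
    ∀ F ∈ M, ∀ F' ∈ M, F ≠ F' → Disjoint F F'

/-- The graph `T` with all edges at `u` removed. -/
def delVert (T : SimpleGraph V) (u : V) : SimpleGraph V where
  Adj a b := T.Adj a b ∧ a ≠ u ∧ b ≠ u
  symm := ⟨fun a b ⟨h, h1, h2⟩ => ⟨h.symm, h2, h1⟩⟩
  loopless := ⟨fun a h => T.loopless.irrefl a h.1⟩

lemma delVert_le (T : SimpleGraph V) (u : V) : delVert T u ≤ T := fun _ _ h => h.1

lemma delVert_support {T : SimpleGraph V} {u : V} :
    ∀ {a b : V} (w : (delVert T u).Walk a b), a ≠ u → u ∉ w.support := by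
  intro a b w
  induction w with
  | nil => intro ha; simp [Ne.symm ha]
  | cons h p ih =>
    intro ha
    rw [SimpleGraph.Walk.support_cons]
    intro hu
    rcases List.mem_cons.mp hu with h1 | h2
    · exact ha h1.symm
    · exact ih h.2.2 h2

lemma two_nbrs_not_reachable {T : SimpleGraph V} (hT : T.IsTree) {u p q : V}
    (hp : T.Adj u p) (hq : T.Adj u q) (hpq : p ≠ q) :
    ¬ (delVert T u).Reachable p q := by
  rintro ⟨w⟩
  have hw : ∀ e ∈ w.edges, e ∈ T.edgeSet := fun e he =>
    SimpleGraph.edgeSet_mono (delVert_le T u) (w.edges_subset_edgeSet he)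
  let w' := w.transfer T hw
  have hsupp : u ∉ w'.support := by
    rw [SimpleGraph.Walk.support_transfer]
    exact delVert_support w (Ne.symm hp.ne)
  have hb : w'.bypass.IsPath := w'.bypass_isPath
  have hbu : u ∉ w'.bypass.support := fun h => hsupp (w'.support_bypass_subset h)
  have hP2 : (SimpleGraph.Walk.cons hp w'.bypass).IsPath := by
    rw [SimpleGraph.Walk.cons_isPath_iff]; exact ⟨hb, hbu⟩
  have hP1 : (SimpleGraph.Walk.cons hq (SimpleGraph.Walk.nil)).IsPath := by
    rw [SimpleGraph.Walk.cons_isPath_iff]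
    refine ⟨SimpleGraph.Walk.IsPath.nil, ?_⟩
    simpa using hq.ne
  have heq := (hT.existsUnique_path u q).unique hP1 hP2
  have hlen := congrArg SimpleGraph.Walk.length heq
  simp only [SimpleGraph.Walk.length_cons, SimpleGraph.Walk.length_nil] at hlen
  exact hpq (SimpleGraph.Walk.eq_of_length_eq_zero (p := w'.bypass) (by omega))

/-- Lemma 3.9: let `M`, `N` be `ν`-matchings of `𝒩(T)` for a tree `T` and `F ∈ M` a facet
meeting more than two facets of `N`.  Then there is a `ν`-matching `W ⊆ M ∪ N`,
different from both `M` and `N`, such that exactly two facets of `W` meet `F`. -/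
theorem exists_matching_two_intersections
    [Fintype V] (G : SimpleGraph V) (hT : G.IsTree)
    (ν : ℕ) (hν : ∀ k M, IsNMatching G k M → k ≤ ν)
    (M N : Finset (Finset V)) (hM : IsNMatching G ν M) (hN : IsNMatching G ν N)
    (F : Finset V) (hF : F ∈ M)
    (hcard : 2 < (N.filter (fun G' => (F ∩ G').Nonempty)).card) :
    ∃ W : Finset (Finset V), IsNMatching G ν W ∧ W ≠ M ∧ W ≠ N ∧ W ⊆ M ∪ N ∧
      (W.filter (fun H => (F ∩ H).Nonempty)).card = 2 := by
  classical
  obtain ⟨hMcard, hMfac, hMdisj⟩ := hM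
  obtain ⟨hNcard, hNfac, hNdisj⟩ := hN
  obtain ⟨u, hFu, -⟩ := hMfac F hF
  set GF := N.filter (fun G' => (F ∩ G').Nonempty) with hGFdef
  -- F is not a facet of N
  have hFN : F ∉ N := by
    intro hFN
    have hsub : GF ⊆ {F} := by
      intro A hA
      obtain ⟨hAN, hAF⟩ := Finset.mem_filter.mp hA
      rcases eq_or_ne A F with h | h
      · simp [h]
      · exact absurd (hNdisj F hFN A hAN (Ne.symm h))
          (Finset.not_disjoint_iff_nonempty_inter.mpr hAF)
    have := Finset.card_le_card hsub
    simp only [Finset.card_singleton] at this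
    omega
  have hGFne : ∀ A ∈ GF, A ≠ F := fun A hA h => hFN (h ▸ (Finset.mem_filter.mp hA).1)
  set AA := (M ∪ N).erase F with hAAdef
  have hmemAA : ∀ {A : Finset V}, A ∈ AA ↔ A ≠ F ∧ A ∈ M ∪ N := fun {A} => Finset.mem_erase
  set Rel : Finset V → Finset V → Prop :=
    fun A B => A ∈ AA ∧ B ∈ AA ∧ (A ∩ B).Nonempty with hReldef
  have hRelsymm : Symmetric Rel := by
    rintro A B ⟨h1, h2, h3⟩
    exact ⟨h2, h1, by rwa [Finset.inter_comm]⟩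
  have hRTsymm : Symmetric (Relation.ReflTransGen Rel) :=
    fun a b h => (haveI : Std.Symm Rel := ⟨hRelsymm⟩; Std.Symm.symm a b h)
  have hufacF : u ∈ F := by rw [hFu]; exact Finset.mem_insert_self _ _
  have hfacets : ∀ A ∈ M ∪ N, IsNFacet G A := by
    intro A hA
    rcases Finset.mem_union.mp hA with h | h
    exacts [hMfac A h, hNfac A h]
  have hcenter : ∀ A ∈ AA, ∃ x, A = closedNbhd G x ∧ x ≠ u := by
    intro A hA
    obtain ⟨hne, hmem⟩ := hmemAA.mp hA
    obtain ⟨x, hx, -⟩ := hfacets A hmem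
    exact ⟨x, hx, fun h => hne (by rw [hx, h, ← hFu])⟩
  have huN : ∀ A ∈ AA, u ∈ A → A ∈ N := by
    intro A hA hu
    obtain ⟨hne, hmem⟩ := hmemAA.mp hA
    rcases Finset.mem_union.mp hmem with h | h
    · exact absurd (hMdisj F hF A h (Ne.symm hne))
        (Finset.not_disjoint_iff_nonempty_inter.mpr ⟨u, Finset.mem_inter.mpr ⟨hufacF, hu⟩⟩)
    · exact h
  -- within a facet of AA, non-u vertices are reachable avoiding u
  have hwithin : ∀ A ∈ AA, ∀ a ∈ A, a ≠ u → ∀ b ∈ A, b ≠ u →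
      (delVert G u).Reachable a b := by
    intro A hA a ha hau b hb hbu
    obtain ⟨x, hx, hxu⟩ := hcenter A hA
    have key : ∀ c ∈ A, c ≠ u → (delVert G u).Reachable c x := by
      intro c hc hcu
      rw [hx] at hc
      rcases Finset.mem_insert.mp hc with h | h
      · exact h ▸ SimpleGraph.Reachable.refl _
      · exact SimpleGraph.Adj.reachable
          ⟨((G.mem_neighborFinset x c).mp h).symm, hcu, hxu⟩
    exact (key a ha hau).trans (key b hb hbu).symm
  -- two intersecting facets of AA share a non-u vertex
  have hmid : ∀ A B, Rel A B → ∃ v, v ∈ A ∧ v ∈ B ∧ v ≠ u := by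
    rintro A B ⟨hA, hB, w, hw⟩
    obtain ⟨hwA, hwB⟩ := Finset.mem_inter.mp hw
    rcases eq_or_ne w u with rfl | hne
    · have hAN := huN A hA hwA
      have hBN := huN B hB hwB
      have hAB : A = B := by
        by_contra hne'
        exact (Finset.not_disjoint_iff_nonempty_inter.mpr
          ⟨w, Finset.mem_inter.mpr ⟨hwA, hwB⟩⟩) (hNdisj A hAN B hBN hne')
      obtain ⟨x, hx, hxu⟩ := hcenter A hA
      refine ⟨x, by rw [hx]; exact Finset.mem_insert_self _ _, ?_, hxu⟩
      rw [← hAB, hx]; exact Finset.mem_insert_self _ _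
    · exact ⟨w, hwA, hwB, hne⟩
  -- chain lemma
  have hchain : ∀ {A B : Finset V}, Relation.ReflTransGen Rel A B → A ∈ AA →
      ∀ a ∈ A, a ≠ u → ∀ b ∈ B, b ≠ u → (delVert G u).Reachable a b := by
    intro A B h hA
    induction h with
    | refl => exact hwithin A hA
    | tail h1 h2 ih =>
      intro a ha hau b hb hbu
      obtain ⟨v, hvc, hvB, hvu⟩ := hmid _ _ h2
      exact (ih a ha hau v hvc hvu).trans (hwithin _ h2.2.1 v hvB hvu b hb hbu)
  -- each facet of GF contains a neighbor of u
  have hnbr : ∀ A ∈ GF, ∃ p, p ∈ A ∧ G.Adj u p := by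
    intro A hA
    obtain ⟨hAN, hFA⟩ := Finset.mem_filter.mp hA
    obtain ⟨w, hw⟩ := hFA
    obtain ⟨hwF, hwA⟩ := Finset.mem_inter.mp hw
    have hwF' : w ∈ closedNbhd G u := by rwa [hFu] at hwF
    rcases Finset.mem_insert.mp hwF' with rfl | h
    · have hAAmem : A ∈ AA := hmemAA.mpr ⟨hGFne A hA, Finset.mem_union_right _ hAN⟩
      obtain ⟨x, hx, hxu⟩ := hcenter A hAAmem
      refine ⟨x, by rw [hx]; exact Finset.mem_insert_self _ _, ?_⟩
      have hmem : w ∈ closedNbhd G x := by rwa [← hx]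
      rcases Finset.mem_insert.mp hmem with h | h
      · exact absurd h.symm hxu
      · exact ((G.mem_neighborFinset x w).mp h).symm
    · exact ⟨w, hwA, (G.mem_neighborFinset u w).mp h⟩
  have hGF_AA : ∀ A ∈ GF, A ∈ AA := fun A hA =>
    hmemAA.mpr ⟨hGFne A hA, Finset.mem_union_right _ (Finset.mem_filter.mp hA).1⟩
  -- KEY: distinct facets of GF are not chain-connected
  have hkey : ∀ A ∈ GF, ∀ B ∈ GF, A ≠ B → ¬ Relation.ReflTransGen Rel A B := by
    intro A hA B hB hne hRT
    obtain ⟨p, hpA, hup⟩ := hnbr A hA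
    obtain ⟨q, hqB, huq⟩ := hnbr B hB
    have hpq : p ≠ q := by
      intro h
      exact (Finset.not_disjoint_iff_nonempty_inter.mpr
        ⟨p, Finset.mem_inter.mpr ⟨hpA, h ▸ hqB⟩⟩)
        (hNdisj A (Finset.mem_filter.mp hA).1 B (Finset.mem_filter.mp hB).1 hne)
    exact two_nbrs_not_reachable hT hup huq hpq
      (hchain hRT (hGF_AA A hA) p hpA (Ne.symm hup.ne) q hqB (Ne.symm huq.ne))
  -- components
  set comp : Finset V → Finset (Finset V) :=
    fun A => AA.filter (fun B => Relation.ReflTransGen Rel A B) with hcompdef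
  set CC : Finset (Finset V) :=
    AA.filter (fun B => ∃ A ∈ GF, Relation.ReflTransGen Rel A B) with hCCdef
  set Closed : Finset (Finset V) → Prop :=
    fun S => S ⊆ AA ∧ ∀ B ∈ S, ∀ C ∈ AA, (B ∩ C).Nonempty → C ∈ S with hCloseddef
  have hcomp_closed : ∀ A, Closed (comp A) := by
    intro A
    refine ⟨Finset.filter_subset _ _, ?_⟩
    intro B hB C hC hint
    obtain ⟨hBA, hRT⟩ := Finset.mem_filter.mp hB
    exact Finset.mem_filter.mpr ⟨hC, hRT.tail ⟨hBA, hC, hint⟩⟩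
  have hCC_closed : Closed CC := by
    refine ⟨Finset.filter_subset _ _, ?_⟩
    intro B hB C hC hint
    obtain ⟨hBA, A, hAGF, hRT⟩ := Finset.mem_filter.mp hB
    exact Finset.mem_filter.mpr ⟨hC, A, hAGF, hRT.tail ⟨hBA, hC, hint⟩⟩
  have hclosed_ext : ∀ S, Closed S → ∀ {B C : Finset V}, B ∈ S →
      Relation.ReflTransGen Rel B C → C ∈ S := by
    intro S hS B C hB h
    induction h with
    | refl => exact hB
    | tail h1 h2 ih => exact hS.2 _ ih _ h2.2.1 h2.2.2
  have hclosed_union : ∀ S T', Closed S → Closed T' → Closed (S ∪ T') := by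
    intro S T' hS hT'
    refine ⟨Finset.union_subset hS.1 hT'.1, ?_⟩
    intro B hB C hC hint
    rcases Finset.mem_union.mp hB with h | h
    · exact Finset.mem_union_left _ (hS.2 B h C hC hint)
    · exact Finset.mem_union_right _ (hT'.2 B h C hC hint)
  have hclosed_diff : ∀ S T', Closed S → Closed T' → Closed (S \ T') := by
    intro S T' hS hT'
    refine ⟨Finset.sdiff_subset.trans hS.1, ?_⟩
    intro B hB C hC hint
    obtain ⟨hBS, hBT⟩ := Finset.mem_sdiff.mp hB
    refine Finset.mem_sdiff.mpr ⟨hS.2 _ hBS _ hC hint, fun hCT =>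
      hBT (hT'.2 _ hCT _ (hS.1 hBS) (by rwa [Finset.inter_comm]))⟩
  -- swap matchings
  set MF := M.erase F with hMFdef
  have hMFcard : MF.card + 1 = ν := by rw [← hMcard]; exact Finset.card_erase_add_one hF
  have hMF_M : ∀ A ∈ MF, A ∈ M := fun A hA => Finset.mem_of_mem_erase hA
  have hMF_AA : ∀ A ∈ MF, A ∈ AA := fun A hA =>
    hmemAA.mpr ⟨Finset.ne_of_mem_erase hA, Finset.mem_union_left _ (hMF_M A hA)⟩
  set W1 : Finset (Finset V) → Finset (Finset V) := fun S => (MF \ S) ∪ (N ∩ S) with hW1def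
  have hW1sub : ∀ S, W1 S ⊆ M ∪ N := by
    intro S A hA
    rcases Finset.mem_union.mp hA with h | h
    · exact Finset.mem_union_left _ (hMF_M A (Finset.mem_sdiff.mp h).1)
    · exact Finset.mem_union_right _ (Finset.mem_inter.mp h).1
  have hW1match : ∀ S, Closed S → IsNMatching G (W1 S).card (W1 S) := by
    intro S hS
    refine ⟨rfl, fun A hA => hfacets A (hW1sub S hA), ?_⟩
    intro A hA B hB hne
    by_contra hnd
    have hint := Finset.not_disjoint_iff_nonempty_inter.mp hnd
    rcases Finset.mem_union.mp hA with hA1 | hA2 <;> rcases Finset.mem_union.mp hB with hB1 | hB2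
    · exact hnd (hMdisj A (hMF_M A (Finset.mem_sdiff.mp hA1).1)
        B (hMF_M B (Finset.mem_sdiff.mp hB1).1) hne)
    · exact (Finset.mem_sdiff.mp hA1).2 (hS.2 B (Finset.mem_inter.mp hB2).2 A
        (hMF_AA A (Finset.mem_sdiff.mp hA1).1) (by rwa [Finset.inter_comm]))
    · exact (Finset.mem_sdiff.mp hB1).2 (hS.2 A (Finset.mem_inter.mp hA2).2 B
        (hMF_AA B (Finset.mem_sdiff.mp hB1).1) hint)
    · exact hnd (hNdisj A (Finset.mem_inter.mp hA2).1 B (Finset.mem_inter.mp hB2).1 hne)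
  have hW1card : ∀ S, (W1 S).card + (MF ∩ S).card = MF.card + (N ∩ S).card := by
    intro S
    have h1 : Disjoint (MF \ S) (N ∩ S) := by
      rw [Finset.disjoint_left]
      intro A hA1 hA2
      exact (Finset.mem_sdiff.mp hA1).2 (Finset.mem_inter.mp hA2).2
    have h2 : (W1 S).card = (MF \ S).card + (N ∩ S).card := Finset.card_union_of_disjoint h1
    have h3 := Finset.card_sdiff_add_card_inter MF S
    omega
  have hLa : ∀ S, Closed S → (N ∩ S).card ≤ (MF ∩ S).card + 1 := by
    intro S hS
    have h1 := hν _ _ (hW1match S hS)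
    have h2 := hW1card S
    omega
  set W2 : Finset (Finset V) → Finset (Finset V) := fun S => (N \ S) ∪ (MF ∩ S) with hW2def
  have hW2sub : ∀ S, W2 S ⊆ M ∪ N := by
    intro S A hA
    rcases Finset.mem_union.mp hA with h | h
    · exact Finset.mem_union_right _ (Finset.mem_sdiff.mp h).1
    · exact Finset.mem_union_left _ (hMF_M A (Finset.mem_inter.mp h).1)
  have hN_AA : ∀ A ∈ N, A ∈ AA := fun A hA =>
    hmemAA.mpr ⟨fun h => hFN (h ▸ hA), Finset.mem_union_right _ hA⟩
  have hW2match : ∀ S, Closed S → IsNMatching G (W2 S).card (W2 S) := by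
    intro S hS
    refine ⟨rfl, fun A hA => hfacets A (hW2sub S hA), ?_⟩
    intro A hA B hB hne
    by_contra hnd
    have hint := Finset.not_disjoint_iff_nonempty_inter.mp hnd
    rcases Finset.mem_union.mp hA with hA1 | hA2 <;> rcases Finset.mem_union.mp hB with hB1 | hB2
    · exact hnd (hNdisj A (Finset.mem_sdiff.mp hA1).1 B (Finset.mem_sdiff.mp hB1).1 hne)
    · exact (Finset.mem_sdiff.mp hA1).2 (hS.2 B (Finset.mem_inter.mp hB2).2 A
        (hN_AA A (Finset.mem_sdiff.mp hA1).1) (by rwa [Finset.inter_comm]))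
    · exact (Finset.mem_sdiff.mp hB1).2 (hS.2 A (Finset.mem_inter.mp hA2).2 B
        (hN_AA B (Finset.mem_sdiff.mp hB1).1) hint)
    · exact hnd (hMdisj A (hMF_M A (Finset.mem_inter.mp hA2).1)
        B (hMF_M B (Finset.mem_inter.mp hB2).1) hne)
  have hW2card : ∀ S, (W2 S).card + (N ∩ S).card = ν + (MF ∩ S).card := by
    intro S
    have h1 : Disjoint (N \ S) (MF ∩ S) := by
      rw [Finset.disjoint_left]
      intro A hA1 hA2
      exact (Finset.mem_sdiff.mp hA1).2 (Finset.mem_inter.mp hA2).2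
    have h2 : (W2 S).card = (N \ S).card + (MF ∩ S).card := Finset.card_union_of_disjoint h1
    have h3 := Finset.card_sdiff_add_card_inter N S
    omega
  have hLb : ∀ S, Closed S → (MF ∩ S).card ≤ (N ∩ S).card := by
    intro S hS
    have h1 := hν _ _ (hW2match S hS)
    have h2 := hW2card S
    omega
  -- the union of components of GF-facets
  have hGF_CC : ∀ A ∈ GF, A ∈ CC := fun A hA =>
    Finset.mem_filter.mpr ⟨hGF_AA A hA, A, hA, Relation.ReflTransGen.refl⟩
  have hLc : (MF ∩ CC).card + 1 ≤ (N ∩ CC).card := by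
    have hFnot : F ∉ W2 CC := by
      intro h
      rcases Finset.mem_union.mp h with h | h
      · exact hFN (Finset.mem_sdiff.mp h).1
      · exact (Finset.mem_erase.mp (Finset.mem_inter.mp h).1).1 rfl
    have hmatch : IsNMatching G (insert F (W2 CC)).card (insert F (W2 CC)) := by
      refine ⟨rfl, ?_, ?_⟩
      · intro A hA
        rcases Finset.mem_insert.mp hA with rfl | h
        · exact hfacets A (Finset.mem_union_left _ hF)
        · exact hfacets A (hW2sub CC h)
      · intro A hA B hB hne
        have key : ∀ C ∈ W2 CC, Disjoint F C := by
          intro C hC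
          by_contra hnd
          have hint := Finset.not_disjoint_iff_nonempty_inter.mp hnd
          rcases Finset.mem_union.mp hC with h | h
          · obtain ⟨hCN, hCS⟩ := Finset.mem_sdiff.mp h
            exact hCS (hGF_CC C (Finset.mem_filter.mpr ⟨hCN, hint⟩))
          · have hCM := hMF_M C (Finset.mem_inter.mp h).1
            have hCne : F ≠ C := fun hh =>
              (Finset.mem_erase.mp (Finset.mem_inter.mp h).1).1 hh.symm
            exact hnd (hMdisj F hF C hCM hCne)
        rcases Finset.mem_insert.mp hA with rfl | hA' <;>
          rcases Finset.mem_insert.mp hB with rfl | hB'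
        · exact absurd rfl hne
        · exact key B hB'
        · exact (key A hA').symm
        · exact (hW2match CC hCC_closed).2.2 A hA' B hB' hne
    have h1 := hν _ _ hmatch
    have h2 : (insert F (W2 CC)).card = (W2 CC).card + 1 :=
      Finset.card_insert_of_notMem hFnot
    have h3 := hW2card CC
    omega
  -- additivity of counts over a split
  have hadd : ∀ (X S T' : Finset (Finset V)), T' ⊆ S →
      (X ∩ S).card = (X ∩ T').card + (X ∩ (S \ T')).card := by
    intro X S T' h
    have hdis : Disjoint (X ∩ T') (X ∩ (S \ T')) :=
      Finset.disjoint_sdiff.mono Finset.inter_subset_right Finset.inter_subset_right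
    rw [← Finset.card_union_of_disjoint hdis, ← Finset.inter_union_distrib_left,
      Finset.union_sdiff_of_subset h]
  -- there is a component with a surplus
  have hsurplus : ∃ A ∈ GF, (N ∩ comp A).card = (MF ∩ comp A).card + 1 := by
    by_contra hno
    push_neg at hno
    have hall : ∀ A ∈ GF, (N ∩ comp A).card = (MF ∩ comp A).card := by
      intro A hA
      have h1 := hLa (comp A) (hcomp_closed A)
      have h2 := hLb (comp A) (hcomp_closed A)
      have h3 := hno A hA
      omega
    have main : ∀ n (S : Finset (Finset V)), S.card ≤ n → Closed S → S ⊆ CC →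
        (N ∩ S).card = (MF ∩ S).card := by
      intro n
      induction n with
      | zero =>
        intro S hcard _ _
        have : S = ∅ := Finset.card_eq_zero.mp (Nat.le_zero.mp hcard)
        simp [this]
      | succ n ih =>
        intro S hScard hS hsub
        rcases S.eq_empty_or_nonempty with rfl | ⟨B, hB⟩
        · simp
        · obtain ⟨hBAA, A, hAGF, hRT⟩ := Finset.mem_filter.mp (hsub hB)
          have hDsubS : comp A ⊆ S := by
            intro C hC
            obtain ⟨hCA, hRT2⟩ := Finset.mem_filter.mp hC
            exact hclosed_ext S hS hB ((hRTsymm hRT).trans hRT2)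
          have hAD : A ∈ comp A :=
            Finset.mem_filter.mpr ⟨hGF_AA A hAGF, Relation.ReflTransGen.refl⟩
          have hssub : S \ comp A ⊂ S := Finset.sdiff_ssubset hDsubS ⟨A, hAD⟩
          have hcard' : (S \ comp A).card ≤ n := by
            have := Finset.card_lt_card hssub
            omega
          have hrec := ih (S \ comp A) hcard'
            (hclosed_diff S (comp A) hS (hcomp_closed A))
            (Finset.sdiff_subset.trans hsub)
          have e1 := hadd N S (comp A) hDsubS
          have e2 := hadd MF S (comp A) hDsubS
          have e3 := hall A hAGF
          omega
    have hCCfin := main CC.card CC le_rfl hCC_closed subset_rfl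
    omega
  obtain ⟨Gs, hGs, hGsEq⟩ := hsurplus
  -- pick two further facets of GF
  have hGsGF := hGs
  have hc1 := Finset.card_erase_add_one hGs
  obtain ⟨G2, hG2⟩ : (GF.erase Gs).Nonempty := Finset.card_pos.mp (by omega)
  have hG2GF : G2 ∈ GF := Finset.mem_of_mem_erase hG2
  have hG2ne : G2 ≠ Gs := Finset.ne_of_mem_erase hG2
  have hc2 := Finset.card_erase_add_one hG2
  obtain ⟨G3, hG3⟩ : ((GF.erase Gs).erase G2).Nonempty := Finset.card_pos.mp (by omega)
  have hG3GF : G3 ∈ GF := Finset.mem_of_mem_erase (Finset.mem_of_mem_erase hG3)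
  have hG3ne2 : G3 ≠ G2 := Finset.ne_of_mem_erase hG3
  have hG3neS : G3 ≠ Gs := Finset.ne_of_mem_erase (Finset.mem_of_mem_erase hG3)
  -- the two components are disjoint
  have hdisj12 : Disjoint (comp Gs) (comp G2) := by
    rw [Finset.disjoint_left]
    intro B hB1 hB2
    exact hkey Gs hGs G2 hG2GF (Ne.symm hG2ne)
      ((Finset.mem_filter.mp hB1).2.trans (hRTsymm (Finset.mem_filter.mp hB2).2))
  set S12 := comp Gs ∪ comp G2 with hS12def
  have hS12closed : Closed S12 := hclosed_union _ _ (hcomp_closed Gs) (hcomp_closed G2)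
  have hsplitN : (N ∩ S12).card = (N ∩ comp Gs).card + (N ∩ comp G2).card := by
    rw [hS12def, Finset.inter_union_distrib_left]
    exact Finset.card_union_of_disjoint
      (hdisj12.mono Finset.inter_subset_right Finset.inter_subset_right)
  have hsplitM : (MF ∩ S12).card = (MF ∩ comp Gs).card + (MF ∩ comp G2).card := by
    rw [hS12def, Finset.inter_union_distrib_left]
    exact Finset.card_union_of_disjoint
      (hdisj12.mono Finset.inter_subset_right Finset.inter_subset_right)
  -- δ(comp G2) = 0
  have hG2eq : (N ∩ comp G2).card = (MF ∩ comp G2).card := by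
    have h1 := hLa S12 hS12closed
    have h2 := hLb (comp G2) (hcomp_closed G2)
    omega
  have hWcard : (W1 S12).card = ν := by
    have h1 := hW1card S12
    omega
  -- Gs and G2 belong to their components
  have hGscomp : Gs ∈ comp Gs :=
    Finset.mem_filter.mpr ⟨hGF_AA Gs hGs, Relation.ReflTransGen.refl⟩
  have hG2comp : G2 ∈ comp G2 :=
    Finset.mem_filter.mpr ⟨hGF_AA G2 hG2GF, Relation.ReflTransGen.refl⟩
  have hGsN : Gs ∈ N := (Finset.mem_filter.mp hGs).1
  have hG2N : G2 ∈ N := (Finset.mem_filter.mp hG2GF).1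
  have hG3N : G3 ∈ N := (Finset.mem_filter.mp hG3GF).1
  refine ⟨W1 S12, ?_, ?_, ?_, hW1sub S12, ?_⟩
  · obtain ⟨-, hfac, hdisj⟩ := hW1match S12 hS12closed
    exact ⟨hWcard, hfac, hdisj⟩
  · -- W ≠ M
    intro h
    have hFW : F ∉ W1 S12 := by
      intro hFW
      rcases Finset.mem_union.mp hFW with hh | hh
      · exact (Finset.mem_erase.mp (Finset.mem_sdiff.mp hh).1).1 rfl
      · exact hFN (Finset.mem_inter.mp hh).1
    exact hFW (h ▸ hF)
  · -- W ≠ N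
    intro h
    have hG3W : G3 ∉ W1 S12 := by
      intro hG3W
      rcases Finset.mem_union.mp hG3W with hh | hh
      · have hG3M := hMF_M G3 (Finset.mem_sdiff.mp hh).1
        have hne : F ≠ G3 := fun hh2 => hGFne G3 hG3GF hh2.symm
        exact (Finset.not_disjoint_iff_nonempty_inter.mpr
          (Finset.mem_filter.mp hG3GF).2) (hMdisj F hF G3 hG3M hne)
      · rcases Finset.mem_union.mp (Finset.mem_inter.mp hh).2 with h1 | h1
        · exact hkey Gs hGs G3 hG3GF (Ne.symm hG3neS) (Finset.mem_filter.mp h1).2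
        · exact hkey G2 hG2GF G3 hG3GF (Ne.symm hG3ne2) (Finset.mem_filter.mp h1).2
    exact hG3W (h.symm ▸ hG3N)
  · -- exactly two facets meet F
    have hfilt : (W1 S12).filter (fun H => (F ∩ H).Nonempty) = {Gs, G2} := by
      apply Finset.Subset.antisymm
      · intro H hH
        obtain ⟨hHW, hHF⟩ := Finset.mem_filter.mp hH
        rcases Finset.mem_union.mp hHW with h | h
        · exfalso
          have hHM := hMF_M H (Finset.mem_sdiff.mp h).1
          have hne : F ≠ H := fun hh =>
            (Finset.mem_erase.mp (Finset.mem_sdiff.mp h).1).1 hh.symm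
          exact (Finset.not_disjoint_iff_nonempty_inter.mpr hHF)
            (hMdisj F hF H hHM hne)
        · obtain ⟨hHN, hHS⟩ := Finset.mem_inter.mp h
          have hHGF : H ∈ GF := Finset.mem_filter.mpr ⟨hHN, hHF⟩
          rcases Finset.mem_union.mp hHS with h1 | h1
          · have : H = Gs := by
              by_contra hne
              exact hkey Gs hGs H hHGF (Ne.symm hne) (Finset.mem_filter.mp h1).2
            simp [this]
          · have : H = G2 := by
              by_contra hne
              exact hkey G2 hG2GF H hHGF (Ne.symm hne) (Finset.mem_filter.mp h1).2
            simp [this]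
      · intro H hH
        rcases Finset.mem_insert.mp hH with rfl | hH'
        · exact Finset.mem_filter.mpr ⟨Finset.mem_union_right _
            (Finset.mem_inter.mpr ⟨hGsN, Finset.mem_union_left _ hGscomp⟩),
            (Finset.mem_filter.mp hGs).2⟩
        · have : H = G2 := Finset.mem_singleton.mp hH'
          subst this
          exact Finset.mem_filter.mpr ⟨Finset.mem_union_right _
            (Finset.mem_inter.mpr ⟨hG2N, Finset.mem_union_right _ hG2comp⟩),
            (Finset.mem_filter.mp hG2GF).2⟩
    rw [hfilt]
    exact Finset.card_pair (Ne.symm hG2ne)
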